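/- Let D ⊆ D' be convex bodies, c ∈ D, 0 < α < 1/6, and S ⊆ D' a convex body with c ∈ S such that for every unit direction u: (1−α)·max_{p∈D}⟨p−c,u⟩ ≤ max_{p∈S}⟨p−c,u⟩ + α·width(D). Then width(S) ≥ (1−3α)·width(D). -/

import Mathlib

/-- The directional width of a set `X` along `u`: `max_{a,b ∈ X} ⟪a - b, u⟫`. -/
noncomputable def dirWidth {d : ℕ} (X : Set (EuclideanSpace ℝ (Fin d)))
    (u : EuclideanSpace ℝ (Fin d)) : ℝ :=
  sSup {s : ℝ | ∃ a ∈ X, ∃ b ∈ X, s = (inner ℝ (a - b) u : ℝ)}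

/-- The width of a set: the minimum of the directional widths over all unit directions. -/
noncomputable def setWidth {d : ℕ} (X : Set (EuclideanSpace ℝ (Fin d))) : ℝ :=
  sInf {r : ℝ | ∃ u : EuclideanSpace ℝ (Fin d), ‖u‖ = 1 ∧ r = dirWidth X u}

private lemma supp_isGreatest {d : ℕ} {X : Set (EuclideanSpace ℝ (Fin d))}
    (hX : IsCompact X) (hne : X.Nonempty) (c u : EuclideanSpace ℝ (Fin d)) :
    IsGreatest {s : ℝ | ∃ p ∈ X, s = (inner ℝ (p - c) u : ℝ)}
      (sSup {s : ℝ | ∃ p ∈ X, s = (inner ℝ (p - c) u : ℝ)}) := by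
  have hcont : Continuous fun p : EuclideanSpace ℝ (Fin d) => (inner ℝ (p - c) u : ℝ) :=
    (continuous_id.sub continuous_const).inner continuous_const
  obtain ⟨p, hp, hmax⟩ := hX.exists_isMaxOn hne hcont.continuousOn
  have hg : IsGreatest {s : ℝ | ∃ p ∈ X, s = (inner ℝ (p - c) u : ℝ)}
      ((inner ℝ (p - c) u : ℝ)) := by
    refine ⟨⟨p, hp, rfl⟩, ?_⟩
    rintro s ⟨q, hq, rfl⟩
    exact hmax hq
  rwa [hg.csSup_eq]

private lemma dirWidth_isGreatest {d : ℕ} {X : Set (EuclideanSpace ℝ (Fin d))}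
    (hX : IsCompact X) (hne : X.Nonempty) (c u : EuclideanSpace ℝ (Fin d)) :
    IsGreatest {s : ℝ | ∃ a ∈ X, ∃ b ∈ X, s = (inner ℝ (a - b) u : ℝ)}
      (sSup {s : ℝ | ∃ p ∈ X, s = (inner ℝ (p - c) u : ℝ)}
        + sSup {s : ℝ | ∃ p ∈ X, s = (inner ℝ (p - c) (-u) : ℝ)}) := by
  obtain ⟨⟨a, ha, hav⟩, hub1⟩ := supp_isGreatest hX hne c u
  obtain ⟨⟨b, hb, hbv⟩, hub2⟩ := supp_isGreatest hX hne c (-u)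
  have hsplit : ∀ x y : EuclideanSpace ℝ (Fin d),
      (inner ℝ (x - y) u : ℝ) = (inner ℝ (x - c) u : ℝ) + (inner ℝ (y - c) (-u) : ℝ) := by
    intro x y
    simp only [inner_sub_left, inner_neg_right]
    ring
  constructor
  · exact ⟨a, ha, b, hb, by rw [hsplit a b, ← hav, ← hbv]⟩
  · rintro s ⟨x, hx, y, hy, rfl⟩
    rw [hsplit x y]
    exact add_le_add (hub1 ⟨x, hx, rfl⟩) (hub2 ⟨y, hy, rfl⟩)

private lemma dirWidth_eq {d : ℕ} {X : Set (EuclideanSpace ℝ (Fin d))}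
    (hX : IsCompact X) (hne : X.Nonempty) (c u : EuclideanSpace ℝ (Fin d)) :
    dirWidth X u = sSup {s : ℝ | ∃ p ∈ X, s = (inner ℝ (p - c) u : ℝ)}
      + sSup {s : ℝ | ∃ p ∈ X, s = (inner ℝ (p - c) (-u) : ℝ)} := by
  have hg := dirWidth_isGreatest hX hne c u
  exact hg.csSup_eq

private lemma dirWidth_nonneg {d : ℕ} {X : Set (EuclideanSpace ℝ (Fin d))}
    (hX : IsCompact X) (hne : X.Nonempty) (u : EuclideanSpace ℝ (Fin d)) :
    0 ≤ dirWidth X u := by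
  obtain ⟨a, ha⟩ := id hne
  have hg := dirWidth_isGreatest hX hne a u
  rw [dirWidth_eq hX hne a u]
  exact hg.2 ⟨a, ha, a, ha, by simp⟩

theorem stmt_13 (d : ℕ) (α : ℝ) (hα0 : 0 < α) (hα : α < 1/6)
    (D D' S : Set (EuclideanSpace ℝ (Fin d)))
    (hDD' : D ⊆ D') (hSD' : S ⊆ D')
    (hDconv : Convex ℝ D) (hDcomp : IsCompact D) (hDint : (interior D).Nonempty)
    (hD'conv : Convex ℝ D') (hD'comp : IsCompact D') (hD'int : (interior D').Nonempty)
    (hSconv : Convex ℝ S) (hScomp : IsCompact S) (hSint : (interior S).Nonempty)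
    (c : EuclideanSpace ℝ (Fin d)) (hcD : c ∈ D) (hcS : c ∈ S)
    (hdir : ∀ u : EuclideanSpace ℝ (Fin d), ‖u‖ = 1 →
      (1 - α) * sSup {s : ℝ | ∃ p ∈ D, s = (inner ℝ (p - c) u : ℝ)} ≤
        sSup {s : ℝ | ∃ p ∈ S, s = (inner ℝ (p - c) u : ℝ)} + α * setWidth D) :
    (1 - 3 * α) * setWidth D ≤ setWidth S := by
  have hDne : D.Nonempty := ⟨c, hcD⟩
  have hSne : S.Nonempty := ⟨c, hcS⟩
  set W := setWidth D with hWdef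
  rcases Nat.eq_zero_or_pos d with hd | hd
  · -- in dimension zero there are no unit vectors, both widths are sInf ∅ = 0
    subst hd
    have hempty : {r : ℝ | ∃ u : EuclideanSpace ℝ (Fin 0), ‖u‖ = 1 ∧ r = dirWidth D u} = ∅ := by
      ext r
      simp only [Set.mem_setOf_eq, Set.mem_empty_iff_false, iff_false]
      rintro ⟨u, hu, -⟩
      rw [Subsingleton.elim u 0, norm_zero] at hu
      norm_num at hu
    have hempty' : {r : ℝ | ∃ u : EuclideanSpace ℝ (Fin 0), ‖u‖ = 1 ∧ r = dirWidth S u} = ∅ := by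
      ext r
      simp only [Set.mem_setOf_eq, Set.mem_empty_iff_false, iff_false]
      rintro ⟨u, hu, -⟩
      rw [Subsingleton.elim u 0, norm_zero] at hu
      norm_num at hu
    have h1 : W = 0 := by rw [hWdef, setWidth, hempty, Real.sInf_empty]
    have h2 : setWidth S = 0 := by rw [setWidth, hempty', Real.sInf_empty]
    rw [h1, h2]; simp
  · -- key pointwise bound
    have hbdd : BddBelow {r : ℝ | ∃ u : EuclideanSpace ℝ (Fin d), ‖u‖ = 1 ∧ r = dirWidth D u} := by
      refine ⟨0, ?_⟩
      rintro r ⟨v, hv, rfl⟩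
      exact dirWidth_nonneg hDcomp hDne v
    have key : ∀ u : EuclideanSpace ℝ (Fin d), ‖u‖ = 1 → (1 - 3 * α) * W ≤ dirWidth S u := by
      intro u hu
      have hu' : ‖-u‖ = 1 := by rwa [norm_neg]
      have h1 := hdir u hu
      have h2 := hdir (-u) hu'
      have hWle : W ≤ dirWidth D u := csInf_le hbdd ⟨u, hu, rfl⟩
      have hDrw := dirWidth_eq hDcomp hDne c u
      have hSrw := dirWidth_eq hScomp hSne c u
      rw [hDrw] at hWle
      rw [hSrw]
      have hsum : (1 - α) * (sSup {s : ℝ | ∃ p ∈ D, s = (inner ℝ (p - c) u : ℝ)}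
          + sSup {s : ℝ | ∃ p ∈ D, s = (inner ℝ (p - c) (-u) : ℝ)}) ≤
          sSup {s : ℝ | ∃ p ∈ S, s = (inner ℝ (p - c) u : ℝ)}
          + sSup {s : ℝ | ∃ p ∈ S, s = (inner ℝ (p - c) (-u) : ℝ)} + 2 * α * W := by
        nlinarith [h1, h2]
      nlinarith [mul_le_mul_of_nonneg_left hWle (by linarith : (0:ℝ) ≤ 1 - α)]
    -- conclude: setWidth S is an inf over a nonempty set, each element ≥ (1-3α)W
    set u0 : EuclideanSpace ℝ (Fin d) := EuclideanSpace.single ⟨0, hd⟩ (1 : ℝ) with hu0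
    have hu0norm : ‖u0‖ = 1 := by
      rw [hu0, EuclideanSpace.norm_single]; norm_num
    have hne2 : {r : ℝ | ∃ u : EuclideanSpace ℝ (Fin d), ‖u‖ = 1 ∧ r = dirWidth S u}.Nonempty :=
      ⟨dirWidth S u0, u0, hu0norm, rfl⟩
    refine le_csInf hne2 ?_
    rintro r ⟨v, hv, rfl⟩
    exact key v hv
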